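/- Let $X$ and $Y$ be Banach spaces and $E := X \oplus_\infty Y$. If $x \in S_X$ is a ccs Daugavet point, then $(x,y) \in S_E$ is a ccs Daugavet point for every $y \in B_Y$. -/

import Mathlib

open Metric Set Pointwise Filter Topology

variable {X : Type*} [NormedAddCommGroup X] [NormedSpace ℝ X]

def sliceSet (f : X →L[ℝ] ℝ) (δ : ℝ) : Set X :=
  {y ∈ closedBall (0 : X) 1 | 1 - δ < f y}

def IsSlice (S : Set X) : Prop :=
  ∃ (f : X →L[ℝ] ℝ) (δ : ℝ), ‖f‖ = 1 ∧ 0 < δ ∧ S = sliceSet f δ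

def IsCCS (C : Set X) : Prop :=
  ∃ (n : ℕ) (l : Fin n → ℝ) (S : Fin n → Set X),
    (∀ i, 0 < l i) ∧ (∑ i, l i) = 1 ∧ (∀ i, IsSlice (S i)) ∧
    C = ∑ i, l i • S i

def RelWeakOpen (V : Set X) : Prop :=
  ∃ U : Set X, IsOpen (show Set (WeakSpace ℝ X) from U) ∧ V = U ∩ closedBall 0 1

def weakClosure (A : Set X) : Set X :=
  @closure (WeakSpace ℝ X) _ A

def SuperDeltaPoint (x : X) : Prop :=
  ∀ V : Set X, RelWeakOpen V → x ∈ V → ∀ ε > 0, ∃ y ∈ V, 2 - ε < ‖x - y‖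

def SuperDaugavetPoint (x : X) : Prop :=
  ∀ V : Set X, RelWeakOpen V → V.Nonempty → ∀ ε > 0, ∃ y ∈ V, 2 - ε < ‖x - y‖

def CcsDeltaPoint (x : X) : Prop :=
  ∀ C : Set X, IsCCS C → x ∈ C → ∀ ε > 0, ∃ y ∈ C, 2 - ε < ‖x - y‖

def CcsDaugavetPoint (x : X) : Prop :=
  ∀ C : Set X, IsCCS C → ∀ ε > 0, ∃ y ∈ C, 2 - ε < ‖x - y‖

lemma mem_finsetSum_iff' {ι M : Type*} [AddCommMonoid M] (s : Finset ι) (F : ι → Set M) (z : M) :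
    z ∈ ∑ i ∈ s, F i ↔ ∃ a : ι → M, (∀ i ∈ s, a i ∈ F i) ∧ ∑ i ∈ s, a i = z := by
  classical
  induction s using Finset.induction_on generalizing z with
  | empty => simp [eq_comm]
  | @insert j s hj ih =>
    rw [Finset.sum_insert hj, Set.mem_add]
    constructor
    · rintro ⟨p, hp, q, hq, rfl⟩
      obtain ⟨a, ha, rfl⟩ := (ih q).1 hq
      refine ⟨Function.update a j p, ?_, ?_⟩
      · intro i hi
        rcases Finset.mem_insert.1 hi with rfl | hi
        · simpa using hp
        · rw [Function.update_of_ne (fun h : i = j => hj (h ▸ hi))]; exact ha i hi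
      · rw [Finset.sum_insert hj, Function.update_self]
        congr 1
        exact Finset.sum_congr rfl fun i hi => Function.update_of_ne (fun h : i = j => hj (h ▸ hi)) _ _
    · rintro ⟨a, ha, rfl⟩
      rw [Finset.sum_insert hj]
      exact ⟨a j, ha j (Finset.mem_insert_self _ _), ∑ i ∈ s, a i,
        (ih _).2 ⟨a, fun i hi => ha i (Finset.mem_insert_of_mem hi), rfl⟩, rfl⟩

theorem ccsDaugavet_infty_sum {X Y : Type*} [NormedAddCommGroup X] [NormedSpace ℝ X]
    [NormedAddCommGroup Y] [NormedSpace ℝ Y] [CompleteSpace X] [CompleteSpace Y]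
    (x : X) (hx : ‖x‖ = 1) (hxd : CcsDaugavetPoint x)
    (y : Y) (hy : y ∈ closedBall (0 : Y) 1) :
    CcsDaugavetPoint ((WithLp.equiv ⊤ (X × Y)).symm (x, y)) := by
  intro C hC ε hε
  obtain ⟨n, l, S, hl, hlsum, hS, hCeq⟩ := hC
  choose f δ hf hδ hSeq using hS
  let e := (WithLp.prodContinuousLinearEquiv ⊤ ℝ X Y).symm.toContinuousLinearMap
  let g : Fin n → (X →L[ℝ] ℝ) := fun i => (f i).comp (e.comp (ContinuousLinearMap.inl ℝ X Y))
  let h : Fin n → (Y →L[ℝ] ℝ) := fun i => (f i).comp (e.comp (ContinuousLinearMap.inr ℝ X Y))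
  have key : ∀ i (a : X) (b : Y),
      f i ((WithLp.equiv ⊤ (X × Y)).symm (a, b)) = g i a + h i b := by
    intro i a b
    have hab : (WithLp.equiv ⊤ (X × Y)).symm (a, b)
        = (WithLp.equiv ⊤ (X × Y)).symm (a, 0) + (WithLp.equiv ⊤ (X × Y)).symm (0, b) := by
      rw [WithLp.equiv_symm_apply, ← WithLp.toLp_add]; congr 1; simp
    rw [hab, map_add]; rfl
  have hgh : ∀ i, 1 ≤ ‖g i‖ + ‖h i‖ := by
    intro i
    rw [← hf i]
    refine (f i).opNorm_le_bound (by positivity) fun z => ?_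
    have hz : z = (WithLp.equiv ⊤ (X × Y)).symm (z.fst, z.snd) := rfl
    rw [hz, key]
    have h1 : ‖z.fst‖ ≤ ‖z‖ := by rw [WithLp.prod_norm_eq_sup]; exact le_sup_left
    have h2 : ‖z.snd‖ ≤ ‖z‖ := by rw [WithLp.prod_norm_eq_sup]; exact le_sup_right
    calc ‖g i z.fst + h i z.snd‖ ≤ ‖g i z.fst‖ + ‖h i z.snd‖ := norm_add_le _ _
      _ ≤ ‖g i‖ * ‖z.fst‖ + ‖h i‖ * ‖z.snd‖ :=
          add_le_add ((g i).le_opNorm _) ((h i).le_opNorm _)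
      _ ≤ ‖g i‖ * ‖z‖ + ‖h i‖ * ‖z‖ := by gcongr
      _ = (‖g i‖ + ‖h i‖) * ‖z‖ := by ring
  -- the slices in X
  set T : Fin n → Set X := fun i => {u ∈ closedBall (0 : X) 1 | ‖g i‖ - δ i / 2 < g i u}
    with hTdef
  have hTslice : ∀ i, IsSlice (T i) := by
    intro i
    by_cases hgi : g i = 0
    · obtain ⟨f₀, hf₀, -⟩ := exists_dual_vector ℝ x (by rw [← norm_ne_zero_iff, hx]; norm_num)
      refine ⟨f₀, 3, hf₀, by norm_num, ?_⟩
      ext u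
      simp only [hTdef, sliceSet, mem_sep_iff]
      constructor
      · rintro ⟨h1, -⟩
        refine ⟨h1, ?_⟩
        have h2 : ‖f₀ u‖ ≤ 1 := by
          calc ‖f₀ u‖ ≤ ‖f₀‖ * ‖u‖ := f₀.le_opNorm u
            _ ≤ 1 := by rw [hf₀, one_mul]; exact mem_closedBall_zero_iff.1 h1
        have h3 := (abs_le.1 (by rwa [Real.norm_eq_abs] at h2)).1
        linarith
      · rintro ⟨h1, -⟩
        refine ⟨h1, ?_⟩
        simp only [hgi, ContinuousLinearMap.zero_apply, norm_zero]
        linarith [hδ i]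
    · have hg0 : (0 : ℝ) < ‖g i‖ := norm_pos_iff.2 hgi
      refine ⟨(‖g i‖⁻¹) • g i, (δ i / 2) / ‖g i‖, ?_, div_pos (half_pos (hδ i)) hg0, ?_⟩
      · have hns := norm_smul (‖g i‖⁻¹) (g i)
        rw [hns, norm_inv, norm_norm, inv_mul_cancel₀ hg0.ne']
      · ext u
        simp only [hTdef, sliceSet, mem_sep_iff, ContinuousLinearMap.smul_apply, smul_eq_mul]
        refine and_congr_right fun _ => ?_
        rw [inv_mul_eq_div, lt_div_iff₀ hg0]
        have heq : (1 - δ i / 2 / ‖g i‖) * ‖g i‖ = ‖g i‖ - δ i / 2 := by field_simp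
        rw [heq]
  obtain ⟨u0, hu0C, hu0⟩ := hxd (∑ i, l i • T i) ⟨n, l, T, hl, hlsum, hTslice, rfl⟩ ε hε
  obtain ⟨c, hc, hcsum⟩ := (mem_finsetSum_iff' Finset.univ (fun i => l i • T i) u0).1 hu0C
  choose u hu huc using fun i => Set.mem_smul_set.1 (hc i (Finset.mem_univ i))
  -- choose the Y components
  have hb : ∀ i, ∃ b ∈ closedBall (0 : Y) 1, ‖h i‖ - δ i / 2 < h i b := by
    intro i
    rcases lt_or_ge (‖h i‖ - δ i / 2) 0 with hcase | hcase
    · exact ⟨0, mem_closedBall_self zero_le_one, by simpa using hcase⟩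
    · have hlt : ‖h i‖ - δ i / 2 < ‖h i‖ := by linarith [hδ i]
      obtain ⟨v, hv1, hv2⟩ := (h i).exists_lt_apply_of_lt_opNorm hlt
      rcases le_or_gt 0 (h i v) with hpos | hneg
      · exact ⟨v, mem_closedBall_zero_iff.2 hv1.le,
          by rwa [Real.norm_eq_abs, abs_of_nonneg hpos] at hv2⟩
      · refine ⟨-v, mem_closedBall_zero_iff.2 (by simpa using hv1.le), ?_⟩
        rw [map_neg]
        rwa [Real.norm_eq_abs, abs_of_neg hneg] at hv2
  choose b hbmem hbval using hb
  refine ⟨∑ i, l i • ((WithLp.equiv ⊤ (X × Y)).symm (u i, b i)), ?_, ?_⟩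
  · rw [hCeq]
    refine (mem_finsetSum_iff' Finset.univ (fun i => l i • S i) _).2
      ⟨fun i => l i • ((WithLp.equiv ⊤ (X × Y)).symm (u i, b i)), fun i _ => ?_, rfl⟩
    refine Set.smul_mem_smul_set ?_
    rw [hSeq i]
    constructor
    · rw [mem_closedBall_zero_iff, WithLp.equiv_symm_apply, WithLp.prod_norm_toLp, Prod.norm_def]
      exact max_le (mem_closedBall_zero_iff.1 (hu i).1) (mem_closedBall_zero_iff.1 (hbmem i))
    · show 1 - δ i < f i _
      rw [key]
      have h1 := (hu i).2
      have h2 := hbval i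
      have h3 := hgh i
      linarith
  · -- norm estimate
    set z : WithLp ⊤ (X × Y) := ∑ i, l i • ((WithLp.equiv ⊤ (X × Y)).symm (u i, b i)) with hzdef
    have hzfst : z.fst = u0 := by
      have h1 : z.fst = ∑ i, (l i • ((WithLp.equiv ⊤ (X × Y)).symm (u i, b i))).fst :=
        by rw [hzdef]; show (WithLp.ofLp (∑ i, l i • ((WithLp.equiv ⊤ (X × Y)).symm (u i, b i)))).1 = _; rw [WithLp.ofLp_sum, Prod.fst_sum]; rfl
      have h2 : ∀ i, (l i • ((WithLp.equiv ⊤ (X × Y)).symm (u i, b i))).fst = l i • u i :=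
        fun i => rfl
      rw [h1]
      simp_rw [h2, huc]
      exact hcsum
    have hfst : ((WithLp.equiv ⊤ (X × Y)).symm (x, y) - z).fst = x - u0 := by
      rw [← hzfst]; rfl
    have hle' : ‖x - u0‖ ≤ ‖(WithLp.equiv ⊤ (X × Y)).symm (x, y) - z‖ := by
      rw [WithLp.prod_norm_eq_sup, hfst]
      exact le_sup_left
    exact lt_of_lt_of_le hu0 hle'
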